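/- Let d ≥ 1 and let R = I − Pᵀ where P is the d×d matrix with P_{i,i+1} = P_{i,i−1} = 1/2 (for indices in range) and all other entries 0. Fix i₀ ∈ {1, …, d} and a sequence (i_k)_{k≥1} of elements of {1, …, d}. Define vectors S_k ∈ ℝ^d by S₀ = e_{i₀} (the i₀-th standard basis vector) and S_{k+1} = S_k − (S_k)_{i_{k+1}} R^{(i_{k+1})}, where R^{(i)} denotes the i-th column of R. Then for every k ≥ 0: all entries of S_k lie in [0, 1], ∑_{j=1}^d (S_k)_j ≤ 1, and (S_{k+1})_{i_{k+1}} = 0. -/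

import Mathlib

open Matrix

lemma stmt14_aux {d : ℕ} (p : Fin d → Prop) [DecidablePred p]
    (h : ∀ a b, p a → p b → a = b) :
    ∑ j : Fin d, (if p j then (1:ℝ)/2 else 0) ≤ 1/2 := by
  rw [Finset.sum_ite, Finset.sum_const_zero, add_zero, Finset.sum_const, nsmul_eq_mul]
  have hc : ((Finset.univ.filter p).card : ℝ) ≤ 1 := by
    have : (Finset.univ.filter p).card ≤ 1 :=
      Finset.card_le_one.mpr (fun a ha b hb =>
        h a b (by simpa using ha) (by simpa using hb))
    exact_mod_cast this
  nlinarith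

/-- The pathwise-derivative recursion for the symmetric Atlas model: starting from a standard
basis vector and repeatedly subtracting `(S_k)_{i_{k+1}}` times the `i_{k+1}`-th column of
`R = I - Pᵀ`, all entries stay in `[0,1]`, the total mass stays at most `1`, and the
coordinate just updated vanishes. -/
theorem stmt14 (d : ℕ) (hd : 1 ≤ d)
    (P : Matrix (Fin d) (Fin d) ℝ)
    (hP : ∀ i j : Fin d, P i j =
      if (j : ℕ) = (i : ℕ) + 1 then 1/2 else if (i : ℕ) = (j : ℕ) + 1 then 1/2 else 0)
    (R : Matrix (Fin d) (Fin d) ℝ) (hR : R = 1 - Pᵀ)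
    (i0 : Fin d) (idx : ℕ → Fin d)
    (S : ℕ → Fin d → ℝ)
    (hS0 : ∀ j, S 0 j = if j = i0 then 1 else 0)
    (hSrec : ∀ k j, S (k + 1) j = S k j - S k (idx (k + 1)) * R j (idx (k + 1))) :
    ∀ k, (∀ j, 0 ≤ S k j ∧ S k j ≤ 1) ∧ (∑ j, S k j ≤ 1) ∧
      S (k + 1) (idx (k + 1)) = 0 := by
  -- basic facts about P
  have hPnn : ∀ i j, 0 ≤ P i j := by
    intro i j; rw [hP]; split_ifs <;> norm_num
  have hPdiag : ∀ i, P i i = 0 := by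
    intro i; rw [hP]; split_ifs with h1 h2 <;> first | rfl | omega
  have hRent : ∀ i j : Fin d, R j i = (if j = i then (1:ℝ) else 0) - P i j := by
    intro i j
    rw [hR]
    simp [Matrix.sub_apply, Matrix.one_apply, Matrix.transpose_apply]
  have hPsum : ∀ i : Fin d, ∑ j, P i j ≤ 1 := by
    intro i
    have hsplit : ∀ j : Fin d, P i j =
        (if (j : ℕ) = (i : ℕ) + 1 then (1:ℝ)/2 else 0) +
        (if (i : ℕ) = (j : ℕ) + 1 then (1:ℝ)/2 else 0) := by
      intro j
      rw [hP]
      split_ifs with hA hB <;> first | omega | norm_num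
    calc ∑ j, P i j
        = (∑ j : Fin d, (if (j : ℕ) = (i : ℕ) + 1 then (1:ℝ)/2 else 0)) +
          (∑ j : Fin d, (if (i : ℕ) = (j : ℕ) + 1 then (1:ℝ)/2 else 0)) := by
          rw [← Finset.sum_add_distrib]; exact Finset.sum_congr rfl fun j _ => hsplit j
      _ ≤ 1/2 + 1/2 := by
          refine add_le_add (stmt14_aux _ ?_) (stmt14_aux _ ?_) <;>
            exact fun a b ha hb => Fin.ext (by omega)
      _ = 1 := by norm_num
  -- the main invariant
  have key : ∀ k, (∀ j, 0 ≤ S k j) ∧ ∑ j, S k j ≤ 1 := by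
    intro k
    induction k with
    | zero =>
      constructor
      · intro j; rw [hS0]; split_ifs <;> norm_num
      · have : ∑ j, S 0 j = 1 := by
          rw [Finset.sum_congr rfl fun j _ => hS0 j]
          simp
        linarith
    | succ k ih =>
      obtain ⟨hnn, hsum⟩ := ih
      set i := idx (k + 1) with hi
      constructor
      · intro j
        rw [hSrec, hRent]
        by_cases hji : j = i
        · subst hji
          rw [hPdiag]
          simp [hi]
        · rw [if_neg hji, ← hi]
          have := hnn j
          have := hnn i
          have := hPnn i j
          nlinarith
      · have hexp : ∑ j, S (k + 1) j
            = ∑ j, S k j - S k i * (1 - ∑ j, P i j) := by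
          rw [Finset.sum_congr rfl fun j _ => hSrec k j]
          rw [Finset.sum_sub_distrib]
          congr 1
          rw [← Finset.mul_sum]
          congr 1
          rw [Finset.sum_congr rfl fun j _ => hRent i j]
          rw [Finset.sum_sub_distrib]
          simp
        rw [hexp]
        have h1 : 0 ≤ S k i := hnn i
        have h2 : ∑ j, P i j ≤ 1 := hPsum i
        nlinarith
  intro k
  obtain ⟨hnn, hsum⟩ := key k
  refine ⟨fun j => ⟨hnn j, ?_⟩, hsum, ?_⟩
  · have : S k j ≤ ∑ j, S k j :=
      Finset.single_le_sum (fun j _ => hnn j) (Finset.mem_univ j)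
    linarith
  · rw [hSrec, hRent]
    rw [hPdiag]
    simp
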